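/- Let l ≥ 3 be an integer and let H be a 3-graph containing no 3-uniform loose cycle of length l. Then there exist l−2 hypergraphs H_1, H_2, …, H_{l−2}, each with vertex set V(H), such that E(H) = E(H_1) ∪ … ∪ E(H_{l−2}) and for each i ∈ {1,…,l−2}, every edge of H_i contains a pair of vertices that is contained in fewer than 2l−2 edges of H_i. -/

import Mathlib

open Finset

section Defs

variable {α : Type*} [DecidableEq α]

/-- `e 0, …, e (l-1)` form a loose cycle of length `l`: distinct edges, each of size
at least 2, cyclically consecutive edges meet in exactly one vertex, all other pairs
of edges are disjoint. -/
def IsLooseCycleOn (l : ℕ) (e : ℕ → Finset α) : Prop :=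
  (∀ i < l, ∀ j < l, i ≠ j → e i ≠ e j) ∧
  (∀ i < l, 2 ≤ (e i).card) ∧
  (∀ i < l, (e i ∩ e ((i + 1) % l)).card = 1) ∧
  (∀ i < l, ∀ j < l, j ≠ i → j ≠ (i + 1) % l → i ≠ (j + 1) % l → e i ∩ e j = ∅)

/-- A hypergraph with edge set `E` contains a loose cycle of length `l`. -/
def ContainsLooseCycle (l : ℕ) (E : Set (Finset α)) : Prop :=
  ∃ e : ℕ → Finset α, IsLooseCycleOn l e ∧ ∀ i < l, e i ∈ E

/-- A hypergraph with edge set `E` contains an `r`-uniform loose cycle of length `l`. -/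
def ContainsUniformLooseCycle (r l : ℕ) (E : Set (Finset α)) : Prop :=
  ∃ e : ℕ → Finset α, IsLooseCycleOn l e ∧ (∀ i < l, (e i).card = r) ∧ ∀ i < l, e i ∈ E

/-- `f 0, …, f (k-1)` form a simple path of length `k`: each edge has size at least 2,
consecutive edges meet, non-consecutive edges are disjoint, and any two distinct
edges meet in at most one vertex. -/
def IsSimplePathOn (k : ℕ) (f : ℕ → Finset α) : Prop :=
  (∀ i < k, 2 ≤ (f i).card) ∧
  (∀ i, i + 1 < k → (f i ∩ f (i + 1)).Nonempty) ∧
  (∀ i < k, ∀ j < k, i < j → j ≠ i + 1 → f i ∩ f j = ∅) ∧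
  (∀ i < k, ∀ j < k, i ≠ j → (f i ∩ f j).card ≤ 1)

/-- The simple path `f 0, …, f (k-1)` joins `a` to `b`. -/
def SimplePathJoins (k : ℕ) (f : ℕ → Finset α) (a b : α) : Prop :=
  IsSimplePathOn k f ∧ a ∈ f 0 ∧ b ∈ f (k - 1) ∧
  (2 ≤ k → a ∉ f 1 ∧ b ∉ f (k - 2))

/-- `p` is a heavy pair of the 3-graph `H` (with respect to the parameter `l`):
it is a pair of vertices contained in at least `2l-2` edges of `H`. -/
def PairHeavy (l : ℕ) (H : Finset (Finset α)) (p : Finset α) : Prop :=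
  p.card = 2 ∧ 2 * l - 2 ≤ (H.filter fun e => p ⊆ e).card

/-- `e` is a light edge of the 3-graph `H`: an edge of `H` containing no heavy pair. -/
def EdgeLight (l : ℕ) (H : Finset (Finset α)) (e : Finset α) : Prop :=
  e ∈ H ∧ ∀ p ⊆ e, ¬ PairHeavy l H p

/-- The reduced hypergraph `H*` of a 3-graph `H`: its edges are the light edges of `H`
together with the heavy pairs of `H`. -/
def Reduced (l : ℕ) (H : Finset (Finset α)) : Set (Finset α) :=
  {e | EdgeLight l H e ∨ PairHeavy l H e}

/-- `(X, Y)` is an extender in the 3-graph `H`. -/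
def IsExtender (l : ℕ) (H : Finset (Finset α)) (X Y : Finset α) : Prop :=
  Disjoint X Y ∧ Y.card ≤ 2 * X.card ∧
  ∀ u ∈ X, ∀ v ∈ X, u ≠ v → ∀ S : Finset α,
    Disjoint S ({u, v} ∪ Y) → S.card ≤ 2 * l - 5 →
      ∃ f : ℕ → Finset α, SimplePathJoins 2 f u v ∧ (∀ i < 2, f i ∈ H) ∧
        ∀ i < 2, Disjoint (f i) S

/-- `X` is an independent set of the hypergraph with edge set `E`. -/
def IndepIn (E : Set (Finset α)) (X : Finset α) : Prop := ∀ e ∈ E, ¬ e ⊆ X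

end Defs

section AuxLight
variable {α : Type*} [DecidableEq α]

lemma pair_card_aux {a b : α} (h : a ≠ b) : ({a, b} : Finset α).card = 2 := by
  rw [card_insert_of_notMem (by simp [h]), card_singleton]

lemma exists_third {l : ℕ} (hl : 3 ≤ l) {G : Finset (Finset α)} (h3 : ∀ e ∈ G, e.card = 3)
    {a b : α} (hab : a ≠ b)
    (hheavy : 2 * l - 2 ≤ (G.filter fun f => ({a, b} : Finset α) ⊆ f).card)
    (B : Finset α) (hB : B.card ≤ 2 * l - 3) :
    ∃ s, s ∉ B ∧ s ≠ a ∧ s ≠ b ∧ ({a, b, s} : Finset α) ∈ G := by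
  classical
  set T := G.filter fun f => ({a, b} : Finset α) ⊆ f with hT
  set T' := T.filter (fun f => f ⊆ insert a (insert b B)) with hT'
  have hcard' : T'.card ≤ B.card := by
    have h1 : T'.card ≤ (B.powersetCard 1).card := by
      apply card_le_card_of_injOn (fun f => f \ {a, b})
      · intro f hf
        simp only [hT', hT, mem_coe, mem_filter] at hf
        obtain ⟨⟨hfG, hpair⟩, hsub⟩ := hf
        rw [mem_coe, mem_powersetCard]
        constructor
        · intro x hx
          simp only [mem_sdiff, mem_insert, mem_singleton] at hx
          have := hsub hx.1
          simp only [mem_insert] at this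
          tauto
        · rw [card_sdiff_of_subset hpair, h3 f hfG, pair_card_aux hab]
      · intro f1 h1 f2 h2 hEq
        simp only [mem_coe, hT', hT, mem_filter] at h1 h2
        have hEq' : f1 \ {a, b} = f2 \ {a, b} := hEq
        rw [← sdiff_union_of_subset h1.1.2, ← sdiff_union_of_subset h2.1.2, hEq']
    rwa [card_powersetCard, Nat.choose_one_right] at h1
  have hTT' : ¬ T ⊆ T' := by
    intro hsub
    have := card_le_card hsub
    omega
  obtain ⟨f, hfT, hfT'⟩ := not_subset.mp hTT'
  simp only [hT', mem_filter, hfT, true_and] at hfT'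
  obtain ⟨s, hsf, hsB⟩ := not_subset.mp hfT'
  simp only [mem_insert, not_or] at hsB
  simp only [hT, mem_filter] at hfT
  obtain ⟨hfG, hpairf⟩ := hfT
  refine ⟨s, hsB.2.2, hsB.1, hsB.2.1, ?_⟩
  have hsubf : ({a, b, s} : Finset α) ⊆ f := by
    intro x hx
    simp only [mem_insert, mem_singleton] at hx
    rcases hx with rfl | rfl | rfl
    · exact hpairf (by simp)
    · exact hpairf (by simp)
    · exact hsf
  have hcards : ({a, b, s} : Finset α).card = 3 := by
    rw [card_insert_of_notMem (by simp [hab, hsB.1, hsB.2.1, Ne.symm hsB.1]),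
      card_insert_of_notMem (by simp [Ne.symm hsB.2.1]), card_singleton]
  have := Finset.eq_of_subset_of_card_le hsubf (by rw [h3 f hfG, hcards])
  rwa [this]

def GrSeq (l : ℕ) (H : Finset (Finset α)) : ℕ → Finset (Finset α)
  | 0 => H
  | j + 1 => (GrSeq l H j).filter fun e =>
      ∀ p ∈ e.powersetCard 2, 2 * l - 2 ≤ ((GrSeq l H j).filter fun f => p ⊆ f).card

lemma GrSeq_succ_subset (l : ℕ) (H : Finset (Finset α)) (j : ℕ) :
    GrSeq l H (j + 1) ⊆ GrSeq l H j := filter_subset _ _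

lemma GrSeq_subset (l : ℕ) (H : Finset (Finset α)) : ∀ j, GrSeq l H j ⊆ H
  | 0 => Finset.Subset.refl _
  | j + 1 => (GrSeq_succ_subset l H j).trans (GrSeq_subset l H j)

lemma mem_GrSeq_succ {l : ℕ} {H : Finset (Finset α)} {j : ℕ} {e : Finset α} :
    e ∈ GrSeq l H (j + 1) ↔ e ∈ GrSeq l H j ∧
      ∀ p ⊆ e, p.card = 2 → 2 * l - 2 ≤ ((GrSeq l H j).filter fun f => p ⊆ f).card := by
  rw [GrSeq, mem_filter]
  simp only [mem_powersetCard]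
  constructor
  · rintro ⟨h1, h2⟩
    exact ⟨h1, fun p hp hc => h2 p ⟨hp, hc⟩⟩
  · rintro ⟨h1, h2⟩
    exact ⟨h1, fun p hp => h2 p hp.1 hp.2⟩

lemma heavy_mono {G G' : Finset (Finset α)} (h : G ⊆ G') {p : Finset α} {c : ℕ}
    (hc : c ≤ (G.filter fun f => p ⊆ f).card) :
    c ≤ (G'.filter fun f => p ⊆ f).card :=
  le_trans hc (card_le_card (filter_subset_filter _ h))

lemma mod_succ_eq {l i : ℕ} (hi : i < l) :
    (i + 1) % l = if i + 1 = l then 0 else i + 1 := by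
  split
  · simp [*, Nat.mod_self]
  · exact Nat.mod_eq_of_lt (by omega)

lemma mod_succ_lt {l : ℕ} (i : ℕ) (hl : 0 < l) : (i + 1) % l < l := Nat.mod_lt _ hl

lemma mod_succ_ne_self {l i : ℕ} (hl : 2 ≤ l) (hi : i < l) : (i + 1) % l ≠ i := by
  rw [mod_succ_eq hi]; split <;> omega

lemma mod_succ_inj {l i j : ℕ} (hi : i < l) (hj : j < l)
    (h : (i + 1) % l = (j + 1) % l) : i = j := by
  rw [mod_succ_eq hi, mod_succ_eq hj] at h
  split at h <;> split at h <;> omega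

lemma mod2_ne {l i : ℕ} (hl : 3 ≤ l) (hi : i < l) : ((i + 1) % l + 1) % l ≠ i := by
  by_cases h : i + 1 = l
  · rw [h, Nat.mod_self, Nat.mod_eq_of_lt (by omega : 0 + 1 < l)]
    omega
  · rw [Nat.mod_eq_of_lt (by omega : i + 1 < l)]
    by_cases h2 : i + 2 = l
    · rw [show i + 1 + 1 = l from by omega, Nat.mod_self]
      omega
    · rw [Nat.mod_eq_of_lt (by omega : i + 1 + 1 < l)]
      omega

lemma no_deep {l : ℕ} (hl : 3 ≤ l) (H : Finset (Finset α)) (h3 : ∀ e ∈ H, e.card = 3)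
    (hfree : ¬ ContainsUniformLooseCycle 3 l (↑H : Set (Finset α))) :
    GrSeq l H (l - 2) = ∅ := by
  classical
  by_contra hne
  obtain ⟨e, he⟩ := nonempty_iff_ne_empty.mpr hne
  have h3' : ∀ j, ∀ f ∈ GrSeq l H j, f.card = 3 := fun j f hf => h3 f (GrSeq_subset l H j hf)
  -- the heavy-pair cycle invariant
  have key : ∀ k, k ≤ l - 3 → ∃ w : ℕ → α,
      (∀ i < 3 + k, ∀ j < 3 + k, i ≠ j → w i ≠ w j) ∧
      (∀ i < 3 + k,
        2 * l - 2 ≤ (H.filter fun f => ({w i, w ((i + 1) % (3 + k))} : Finset α) ⊆ f).card) ∧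
      (2 * l - 2 ≤
        ((GrSeq l H (l - 3 - k)).filter fun f => ({w 0, w 1} : Finset α) ⊆ f).card) := by
    intro k
    induction k with
    | zero =>
      intro _
      have hrw : l - 2 = (l - 3) + 1 := by omega
      rw [hrw, mem_GrSeq_succ] at he
      obtain ⟨he1, he2⟩ := he
      obtain ⟨a, b, c, hab, hac, hbc, rfl⟩ := Finset.card_eq_three.mp (h3' _ _ he1)
      refine ⟨fun i => if i = 0 then a else if i = 1 then b else c, ?_, ?_, ?_⟩
      · intro i hi j hj hij
        interval_cases i <;> interval_cases j <;> simp_all [eq_comm]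
      · intro i hi
        interval_cases i
        · show 2 * l - 2 ≤ (H.filter fun f => ({a, b} : Finset α) ⊆ f).card
          exact heavy_mono (GrSeq_subset l H (l - 3))
            (he2 {a, b} (by intro x hx; simp only [mem_insert, mem_singleton] at hx ⊢; tauto)
              (pair_card_aux hab))
        · show 2 * l - 2 ≤ (H.filter fun f => ({b, c} : Finset α) ⊆ f).card
          exact heavy_mono (GrSeq_subset l H (l - 3))
            (he2 {b, c} (by intro x hx; simp only [mem_insert, mem_singleton] at hx ⊢; tauto)
              (pair_card_aux hbc))
        · show 2 * l - 2 ≤ (H.filter fun f => ({c, a} : Finset α) ⊆ f).card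
          exact heavy_mono (GrSeq_subset l H (l - 3))
            (he2 {c, a} (by intro x hx; simp only [mem_insert, mem_singleton] at hx ⊢; tauto)
              (pair_card_aux (Ne.symm hac)))
      · show 2 * l - 2 ≤ ((GrSeq l H (l - 3 - 0)).filter fun f => ({a, b} : Finset α) ⊆ f).card
        have h0 : l - 3 - 0 = l - 3 := by omega
        rw [h0]
        exact he2 {a, b} (by intro x hx; simp only [mem_insert, mem_singleton] at hx ⊢; tauto)
          (pair_card_aux hab)
    | succ k ih =>
      intro hk1
      obtain ⟨w, hw, hpairs, hspec⟩ := ih (by omega)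
      have hab : w 0 ≠ w 1 := hw 0 (by omega) 1 (by omega) (by omega)
      -- choose a new vertex s subdividing the special pair
      have hBcard : (((range (3 + k)).image w) \ ({w 0, w 1} : Finset α)).card ≤ 2 * l - 3 := by
        calc (((range (3 + k)).image w) \ ({w 0, w 1} : Finset α)).card
            ≤ ((range (3 + k)).image w).card := card_le_card sdiff_subset
          _ ≤ (range (3 + k)).card := card_image_le
          _ = 3 + k := card_range _
          _ ≤ 2 * l - 3 := by omega
      obtain ⟨s, hsB, hsa, hsb, hf⟩ := exists_third hl (h3' (l - 3 - k)) hab hspec _ hBcard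
      have hsw : ∀ i < 3 + k, s ≠ w i := by
        intro i hi hsi
        by_cases hi0 : i = 0
        · exact hsa (by rw [hsi, hi0])
        · by_cases hi1 : i = 1
          · exact hsb (by rw [hsi, hi1])
          · apply hsB
            rw [mem_sdiff]
            constructor
            · exact mem_image.mpr ⟨i, mem_range.mpr hi, hsi.symm⟩
            · simp only [mem_insert, mem_singleton, not_or]
              exact ⟨hsa, hsb⟩
      have hj1 : l - 3 - k = (l - 3 - (k + 1)) + 1 := by omega
      rw [hj1, mem_GrSeq_succ] at hf
      obtain ⟨hf1, hf2⟩ := hf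
      have hp1 : 2 * l - 2 ≤ ((GrSeq l H (l - 3 - (k + 1))).filter
          fun f => ({w 0, s} : Finset α) ⊆ f).card :=
        hf2 {w 0, s} (by intro x hx; simp only [mem_insert, mem_singleton] at hx ⊢; tauto)
          (pair_card_aux fun h => hsa h.symm)
      have hp2 : 2 * l - 2 ≤ ((GrSeq l H (l - 3 - (k + 1))).filter
          fun f => ({s, w 1} : Finset α) ⊆ f).card :=
        hf2 {s, w 1} (by intro x hx; simp only [mem_insert, mem_singleton] at hx ⊢; tauto)
          (pair_card_aux hsb)
      set w' : ℕ → α := fun i => if i = 0 then w 0 else if i = 1 then s else w (i - 1)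
        with hw'def
      have hw'0 : w' 0 = w 0 := by simp [hw'def]
      have hw'1 : w' 1 = s := by simp [hw'def]
      have hw'ge : ∀ i, 2 ≤ i → w' i = w (i - 1) := by
        intro i hi2
        simp only [hw'def]
        rw [if_neg (by omega), if_neg (by omega)]
      refine ⟨w', ?_, ?_, ?_⟩
      · have main : ∀ i < 3 + (k + 1), ∀ j < 3 + (k + 1), i < j → w' i ≠ w' j := by
          intro i hi j hj hlt
          by_cases hi0 : i = 0
          · subst hi0
            by_cases hj1' : j = 1
            · subst hj1'
              rw [hw'0, hw'1]
              exact fun h => hsa h.symm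
            · rw [hw'0, hw'ge j (by omega)]
              exact hw 0 (by omega) (j - 1) (by omega) (by omega)
          · by_cases hi1 : i = 1
            · subst hi1
              rw [hw'1, hw'ge j (by omega)]
              exact hsw (j - 1) (by omega)
            · rw [hw'ge i (by omega), hw'ge j (by omega)]
              exact hw (i - 1) (by omega) (j - 1) (by omega) (by omega)
        intro i hi j hj hij
        rcases Nat.lt_or_ge i j with h | h
        · exact main i hi j hj h
        · exact (main j hj i hi (by omega)).symm
      · intro i hi
        by_cases hi0 : i = 0
        · subst hi0
          rw [show (0 + 1) % (3 + (k + 1)) = 1 from Nat.mod_eq_of_lt (by omega), hw'0, hw'1]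
          exact heavy_mono (GrSeq_subset l H _) hp1
        · by_cases hi1 : i = 1
          · subst hi1
            rw [show (1 + 1) % (3 + (k + 1)) = 2 from Nat.mod_eq_of_lt (by omega), hw'1,
              hw'ge 2 (by omega), show (2 : ℕ) - 1 = 1 from rfl]
            exact heavy_mono (GrSeq_subset l H _) hp2
          · by_cases hlast : i = k + 3
            · subst hlast
              rw [show (k + 3 + 1) % (3 + (k + 1)) = 0 from by
                  rw [show k + 3 + 1 = 3 + (k + 1) from by omega]; exact Nat.mod_self _,
                hw'0, hw'ge (k + 3) (by omega), show k + 3 - 1 = 2 + k from by omega]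
              have hlp := hpairs (2 + k) (by omega)
              rw [show (2 + k + 1) % (3 + k) = 0 from by
                  rw [show 2 + k + 1 = 3 + k from by omega]; exact Nat.mod_self _] at hlp
              exact hlp
            · rw [show (i + 1) % (3 + (k + 1)) = i + 1 from Nat.mod_eq_of_lt (by omega),
                hw'ge i (by omega), hw'ge (i + 1) (by omega),
                show i + 1 - 1 = i from by omega]
              have hlp := hpairs (i - 1) (by omega)
              rw [show (i - 1 + 1) % (3 + k) = i from by
                  rw [show i - 1 + 1 = i from by omega]; exact Nat.mod_eq_of_lt (by omega)] at hlp
              exact hlp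
      · rw [hw'0, hw'1]
        exact hp1
  obtain ⟨w, hw, hpairs, -⟩ := key (l - 3) (le_refl _)
  rw [show 3 + (l - 3) = l from by omega] at hw hpairs
  have hl0 : 0 < l := by omega
  have zex : ∀ t, t ≤ l → ∃ z : ℕ → α,
      (∀ i < t, ∀ j < t, i ≠ j → z i ≠ z j) ∧
      (∀ i < t, ∀ j < l, z i ≠ w j) ∧
      (∀ i < t, ({w i, w ((i + 1) % l), z i} : Finset α) ∈ H) := by
    intro t
    induction t with
    | zero =>
      exact fun _ => ⟨fun _ => w 0, fun i hi => absurd hi (Nat.not_lt_zero i),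
        fun i hi => absurd hi (Nat.not_lt_zero i), fun i hi => absurd hi (Nat.not_lt_zero i)⟩
    | succ t ih =>
      intro ht
      obtain ⟨z, hz1, hz2, hz3⟩ := ih (by omega)
      have ht' : t < l := ht
      have hmlt : (t + 1) % l < l := mod_succ_lt t hl0
      have hab : w t ≠ w ((t + 1) % l) :=
        hw t ht' ((t + 1) % l) hmlt (Ne.symm (mod_succ_ne_self (by omega) ht'))
      have hpair_sub : ({w t, w ((t + 1) % l)} : Finset α) ⊆ (range l).image w := by
        intro x hx
        simp only [mem_insert, mem_singleton] at hx
        rcases hx with rfl | rfl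
        · exact mem_image.mpr ⟨t, mem_range.mpr ht', rfl⟩
        · exact mem_image.mpr ⟨(t + 1) % l, mem_range.mpr hmlt, rfl⟩
      have hwinj : Set.InjOn w ↑(range l) := by
        intro x hx y hy hxy
        by_contra hne'
        exact hw x (mem_range.mp hx) y (mem_range.mp hy) hne' hxy
      have hBcard : (((range l).image w \ ({w t, w ((t + 1) % l)} : Finset α)) ∪
          (range t).image z).card ≤ 2 * l - 3 := by
        have h1 : ((range l).image w).card = l := by
          rw [card_image_of_injOn hwinj, card_range]
        have h2 : (((range l).image w) \ ({w t, w ((t + 1) % l)} : Finset α)).card = l - 2 := by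
          rw [card_sdiff_of_subset hpair_sub, h1, pair_card_aux hab]
        have h3' : ((range t).image z).card ≤ t := by
          calc ((range t).image z).card ≤ (range t).card := card_image_le
            _ = t := card_range _
        calc (((range l).image w \ ({w t, w ((t + 1) % l)} : Finset α)) ∪
            (range t).image z).card
            ≤ (((range l).image w) \ ({w t, w ((t + 1) % l)} : Finset α)).card
              + ((range t).image z).card := card_union_le _ _
          _ ≤ 2 * l - 3 := by omega
      obtain ⟨s, hsB, hsa, hsb, hsH⟩ := exists_third hl h3 hab (hpairs t ht') _ hBcard
      have hsw' : ∀ j < l, s ≠ w j := by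
        intro j hj hsj
        by_cases h1 : w j = w t
        · exact hsa (hsj.trans h1)
        · by_cases h2 : w j = w ((t + 1) % l)
          · exact hsb (hsj.trans h2)
          · apply hsB
            apply mem_union_left
            rw [mem_sdiff]
            refine ⟨mem_image.mpr ⟨j, mem_range.mpr hj, hsj.symm⟩, ?_⟩
            simp only [mem_insert, mem_singleton, not_or]
            exact ⟨hsa, hsb⟩
      have hsz : ∀ i < t, s ≠ z i := by
        intro i hi hszi
        exact hsB (mem_union_right _ (mem_image.mpr ⟨i, mem_range.mpr hi, hszi.symm⟩))
      refine ⟨fun i => if i = t then s else z i, ?_, ?_, ?_⟩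
      · intro i hi j hj hij
        by_cases h1 : i = t <;> by_cases h2 : j = t
        · exact absurd (h1.trans h2.symm) hij
        · simp only [if_pos h1, if_neg h2]
          exact hsz j (by omega)
        · simp only [if_neg h1, if_pos h2]
          exact fun h => hsz i (by omega) h.symm
        · simp only [if_neg h1, if_neg h2]
          exact hz1 i (by omega) j (by omega) hij
      · intro i hi j hj
        by_cases h1 : i = t
        · simp only [if_pos h1]
          exact hsw' j hj
        · simp only [if_neg h1]
          exact hz2 i (by omega) j hj
      · intro i hi
        by_cases h1 : i = t
        · simp only [if_pos h1, h1]
          exact hsH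
        · simp only [if_neg h1]
          exact hz3 i (by omega)
  obtain ⟨z, hz1, hz2, hz3⟩ := zex l (le_refl l)
  have hcard3 : ∀ i < l, ({w i, w ((i + 1) % l), z i} : Finset α).card = 3 := by
    intro i hi
    have h1 : w i ≠ w ((i + 1) % l) :=
      hw i hi _ (mod_succ_lt i hl0) (Ne.symm (mod_succ_ne_self (by omega) hi))
    have h2 : w i ≠ z i := fun h => hz2 i hi i hi h.symm
    have h3' : w ((i + 1) % l) ≠ z i := fun h => hz2 i hi _ (mod_succ_lt i hl0) h.symm
    rw [card_insert_of_notMem (by simp [h1, h2]),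
      card_insert_of_notMem (by simp [h3']), card_singleton]
  apply hfree
  refine ⟨fun i => ({w i, w ((i + 1) % l), z i} : Finset α), ⟨?_, ?_, ?_, ?_⟩, ?_, ?_⟩
  · intro i hi j hj hij heq
    have heq' : ({w i, w ((i + 1) % l), z i} : Finset α) = {w j, w ((j + 1) % l), z j} := heq
    have hzi : z i ∈ ({w j, w ((j + 1) % l), z j} : Finset α) := by
      rw [← heq']; simp
    simp only [mem_insert, mem_singleton] at hzi
    rcases hzi with h | h | h
    · exact hz2 i hi j hj h
    · exact hz2 i hi _ (mod_succ_lt j hl0) h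
    · exact hz1 i hi j hj hij h
  · intro i hi
    rw [hcard3 i hi]
    omega
  · intro i hi
    have hi1 : (i + 1) % l < l := mod_succ_lt i hl0
    have hi2 : ((i + 1) % l + 1) % l < l := mod_succ_lt _ hl0
    have A1 : w i ≠ w ((i + 1) % l) :=
      hw i hi _ hi1 (Ne.symm (mod_succ_ne_self (by omega) hi))
    have A2 : w i ≠ w (((i + 1) % l + 1) % l) := hw i hi _ hi2 (Ne.symm (mod2_ne hl hi))
    have A3 : w i ≠ z ((i + 1) % l) := fun h => hz2 _ hi1 i hi h.symm
    have A4 : z i ≠ w ((i + 1) % l) := hz2 i hi _ hi1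
    have A5 : z i ≠ w (((i + 1) % l + 1) % l) := hz2 i hi _ hi2
    have A6 : z i ≠ z ((i + 1) % l) := hz1 i hi _ hi1 (Ne.symm (mod_succ_ne_self (by omega) hi))
    have hset : ({w i, w ((i + 1) % l), z i} : Finset α) ∩
        {w ((i + 1) % l), w (((i + 1) % l + 1) % l), z ((i + 1) % l)} = {w ((i + 1) % l)} := by
      ext x
      simp only [mem_inter, mem_insert, mem_singleton]
      constructor
      · rintro ⟨h1 | h1 | h1, h2 | h2 | h2⟩ <;> subst h1 <;>
          first
          | rfl
          | exact absurd h2 A1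
          | exact absurd h2 A2
          | exact absurd h2 A3
          | exact absurd h2 A4
          | exact absurd h2 A5
          | exact absurd h2 A6
      · rintro rfl
        exact ⟨Or.inr (Or.inl rfl), Or.inl rfl⟩
    show (({w i, w ((i + 1) % l), z i} : Finset α) ∩
        {w ((i + 1) % l), w (((i + 1) % l + 1) % l), z ((i + 1) % l)}).card = 1
    rw [hset, card_singleton]
  · intro i hi j hj hne1 hne2 hne3
    have hi1 : (i + 1) % l < l := mod_succ_lt i hl0
    have hj1 : (j + 1) % l < l := mod_succ_lt j hl0
    have B1 : w i ≠ w j := hw i hi j hj (Ne.symm hne1)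
    have B2 : w i ≠ w ((j + 1) % l) := hw i hi _ hj1 hne3
    have B3 : w i ≠ z j := fun h => hz2 j hj i hi h.symm
    have B4 : w ((i + 1) % l) ≠ w j := hw _ hi1 j hj (fun h => hne2 h.symm)
    have B5 : w ((i + 1) % l) ≠ w ((j + 1) % l) :=
      hw _ hi1 _ hj1 (fun h => (Ne.symm hne1) (mod_succ_inj hi hj h))
    have B6 : w ((i + 1) % l) ≠ z j := fun h => hz2 j hj _ hi1 h.symm
    have B7 : z i ≠ w j := hz2 i hi j hj
    have B8 : z i ≠ w ((j + 1) % l) := hz2 i hi _ hj1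
    have B9 : z i ≠ z j := hz1 i hi j hj (Ne.symm hne1)
    rw [Finset.eq_empty_iff_forall_notMem]
    intro x hx
    simp only [mem_inter, mem_insert, mem_singleton] at hx
    obtain ⟨h1 | h1 | h1, h2 | h2 | h2⟩ := hx <;> subst h1 <;>
      first
      | exact B1 h2
      | exact B2 h2
      | exact B3 h2
      | exact B4 h2
      | exact B5 h2
      | exact B6 h2
      | exact B7 h2
      | exact B8 h2
      | exact B9 h2
  · intro i hi
    exact hcard3 i hi
  · intro i hi
    exact hz3 i hi


end AuxLight


/-- Every `C_l^3`-free 3-graph `H` decomposes into `l - 2` hypergraphs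
`H_1, …, H_{l-2}` with `E(H) = ⋃ E(H_i)` such that every edge of each `H_i`
contains a pair lying in fewer than `2l - 2` edges of `H_i`. -/
theorem light_pairs_decomposition {α : Type*} [DecidableEq α] (l : ℕ) (hl : 3 ≤ l)
    (H : Finset (Finset α)) (h3 : ∀ e ∈ H, e.card = 3)
    (hfree : ¬ ContainsUniformLooseCycle 3 l (↑H : Set (Finset α))) :
    ∃ Hs : Fin (l - 2) → Finset (Finset α),
      (∀ e, e ∈ H ↔ ∃ i, e ∈ Hs i) ∧
      ∀ i, ∀ e ∈ Hs i, ∃ p ⊆ e, p.card = 2 ∧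
        ((Hs i).filter fun f => p ⊆ f).card < 2 * l - 2 := by
  classical
  have hGr : GrSeq l H (l - 2) = ∅ := no_deep hl H h3 hfree
  refine ⟨fun i => GrSeq l H i.val \ GrSeq l H (i.val + 1), ?_, ?_⟩
  · intro e
    constructor
    · intro he
      have hdrop : ∀ n, e ∉ GrSeq l H n → ∃ t < n, e ∈ GrSeq l H t ∧ e ∉ GrSeq l H (t + 1) := by
        intro n
        induction n with
        | zero => exact fun h => absurd he h
        | succ n ih =>
          intro h
          by_cases hn : e ∈ GrSeq l H n
          · exact ⟨n, Nat.lt_succ_self n, hn, h⟩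
          · obtain ⟨t, ht, h1, h2⟩ := ih hn
            exact ⟨t, Nat.lt_succ_of_lt ht, h1, h2⟩
      obtain ⟨t, ht, h1, h2⟩ := hdrop (l - 2) (by rw [hGr]; exact notMem_empty e)
      exact ⟨⟨t, ht⟩, mem_sdiff.mpr ⟨h1, h2⟩⟩
    · rintro ⟨i, hi⟩
      exact GrSeq_subset l H i.val (mem_sdiff.mp hi).1
  · intro i e he
    rw [mem_sdiff] at he
    obtain ⟨h1, h2⟩ := he
    have h2' : ¬ ∀ p ⊆ e, p.card = 2 →
        2 * l - 2 ≤ ((GrSeq l H i.val).filter fun f => p ⊆ f).card :=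
      fun hB => h2 (mem_GrSeq_succ.mpr ⟨h1, hB⟩)
    push_neg at h2'
    obtain ⟨p, hpe, hpc, hplt⟩ := h2'
    refine ⟨p, hpe, hpc, ?_⟩
    calc ((GrSeq l H i.val \ GrSeq l H (i.val + 1)).filter fun f => p ⊆ f).card
        ≤ ((GrSeq l H i.val).filter fun f => p ⊆ f).card :=
          card_le_card (filter_subset_filter _ sdiff_subset)
      _ < 2 * l - 2 := hplt
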